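/- Semicontinuity of Lyapunov exponent sums under small-measure modifications: given a bounded cocycle A, a bound C > ‖A^{±1}‖_∞, and ε > 0, there exists δ > 0 such that for every cocycle B with ‖B^{±1}‖_∞ < C and μ({x : B(x) ≠ A(x)}) < δ, one has L_i(B) < L_i(A) + ε. -/

import Mathlib

open MeasureTheory Filter
open scoped ENNReal

/-- Operator norm (on Euclidean space) of a square real matrix. -/
noncomputable def matOpNorm {d : ℕ} (M : Matrix (Fin d) (Fin d) ℝ) : ℝ :=
  ‖LinearMap.toContinuousLinearMap (Matrix.toEuclideanLin M)‖

/-- The operator norm of the `i`-th exterior power of a matrix `A`. -/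
noncomputable def extPowNorm (i d : ℕ) (A : Matrix (Fin d) (Fin d) ℝ) : ℝ :=
  sSup { r : ℝ | ∃ v : Fin i → (Fin d → ℝ), (∀ a, ∑ j, v a j ^ 2 ≤ 1) ∧
    r = Real.sqrt (Matrix.det
      (Matrix.of fun a b : Fin i => ∑ j, A.mulVec (v a) j * A.mulVec (v b) j)) }

/-- The cocycle products `A^n_f(x) = A(f^{n-1} x) ⋯ A(x)`. -/
noncomputable def cocycleProd {X : Type*} (f : X → X) (d : ℕ)
    (A : X → Matrix (Fin d) (Fin d) ℝ) : ℕ → X → Matrix (Fin d) (Fin d) ℝ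
  | 0, _ => 1
  | n + 1, x => cocycleProd f d A n (f x) * A x

/-- `L_i(A) = inf_{n ≥ 1} (1/n) ∫ log ‖Λ^i A^n_f(x)‖ dμ(x)`. -/
noncomputable def lyapSum {X : Type*} [MeasurableSpace X] (μ : Measure X) (f : X → X)
    (d i : ℕ) (A : X → Matrix (Fin d) (Fin d) ℝ) : ℝ :=
  ⨅ n : ℕ, (1 / (n + 1 : ℝ)) *
    ∫ x, Real.log (extPowNorm i d (cocycleProd f d A (n + 1) x)) ∂μ

set_option linter.unusedSectionVars false
set_option maxHeartbeats 1000000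

namespace Aux
variable {d : ℕ}

lemma matOpNorm_nonneg (M : Matrix (Fin d) (Fin d) ℝ) : 0 ≤ matOpNorm M := norm_nonneg _

lemma norm_symm_equiv (v : Fin d → ℝ) :
    ‖(WithLp.equiv 2 (Fin d → ℝ)).symm v‖ = Real.sqrt (∑ j, v j ^ 2) := by
  rw [EuclideanSpace.norm_eq]
  congr 1
  refine Finset.sum_congr rfl fun j _ => ?_
  rw [WithLp.equiv_symm_apply, PiLp.toLp_apply, Real.norm_eq_abs, sq_abs]

lemma norm_mulVec_le (M : Matrix (Fin d) (Fin d) ℝ) (v : Fin d → ℝ) :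
    Real.sqrt (∑ j, M.mulVec v j ^ 2) ≤ matOpNorm M * Real.sqrt (∑ j, v j ^ 2) := by
  have h := (LinearMap.toContinuousLinearMap (Matrix.toEuclideanLin M)).le_opNorm
    ((WithLp.equiv 2 (Fin d → ℝ)).symm v)
  rw [LinearMap.coe_toContinuousLinearMap'] at h
  rw [norm_symm_equiv, WithLp.equiv_symm_apply, Matrix.toEuclideanLin_apply_piLp_toLp, ← WithLp.equiv_symm_apply, norm_symm_equiv] at h
  exact h

lemma matOpNorm_mul_le (M N : Matrix (Fin d) (Fin d) ℝ) :
    matOpNorm (M * N) ≤ matOpNorm M * matOpNorm N := by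
  have : Matrix.toEuclideanLin (M * N) =
      (Matrix.toEuclideanLin M).comp (Matrix.toEuclideanLin N) := by
    refine LinearMap.ext fun v => ?_
    rw [LinearMap.comp_apply, Matrix.toEuclideanLin_apply, Matrix.toEuclideanLin_apply,
      Matrix.toEuclideanLin_apply]
    simp [Matrix.mulVec_mulVec]
  have h2 : LinearMap.toContinuousLinearMap ((Matrix.toEuclideanLin M).comp (Matrix.toEuclideanLin N)) =
      (LinearMap.toContinuousLinearMap (Matrix.toEuclideanLin M)).comp
        (LinearMap.toContinuousLinearMap (Matrix.toEuclideanLin N)) := by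
    refine ContinuousLinearMap.ext fun v => ?_
    simp only [ContinuousLinearMap.comp_apply, LinearMap.coe_toContinuousLinearMap',
      LinearMap.comp_apply]
  unfold matOpNorm
  rw [this, h2]
  exact ContinuousLinearMap.opNorm_comp_le _ _

lemma toEuclideanLin_one :
    Matrix.toEuclideanLin (1 : Matrix (Fin d) (Fin d) ℝ) = LinearMap.id := by
  refine LinearMap.ext fun v => ?_
  have := Matrix.toEuclideanLin_apply_piLp_toLp (1 : Matrix (Fin d) (Fin d) ℝ)
    ((WithLp.equiv 2 (Fin d → ℝ)) v)
  rw [Matrix.one_mulVec] at this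
  simpa using this

lemma matOpNorm_one_le : matOpNorm (1 : Matrix (Fin d) (Fin d) ℝ) ≤ 1 := by
  unfold matOpNorm
  refine ContinuousLinearMap.opNorm_le_bound _ zero_le_one fun v => ?_
  rw [one_mul]
  have : LinearMap.toContinuousLinearMap (Matrix.toEuclideanLin
      (1 : Matrix (Fin d) (Fin d) ℝ)) v = v := by
    rw [LinearMap.coe_toContinuousLinearMap', toEuclideanLin_one, LinearMap.id_apply]
  rw [this]

lemma matOpNorm_one (hd : 0 < d) : matOpNorm (1 : Matrix (Fin d) (Fin d) ℝ) = 1 := by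
  have h1 := toEuclideanLin_one (d := d)
  unfold matOpNorm
  rw [h1]
  haveI : Nonempty (Fin d) := ⟨⟨0, hd⟩⟩
  have : LinearMap.toContinuousLinearMap (LinearMap.id : EuclideanSpace ℝ (Fin d) →ₗ[ℝ] _)
      = ContinuousLinearMap.id ℝ (EuclideanSpace ℝ (Fin d)) := by
    rfl
  rw [this]
  exact ContinuousLinearMap.norm_id

end Aux

namespace Aux2
variable {d : ℕ}

noncomputable def gram (i : ℕ) {d : ℕ} (M : Matrix (Fin d) (Fin d) ℝ)
    (v : Fin i → Fin d → ℝ) : ℝ :=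
  Real.sqrt (Matrix.det (Matrix.of fun a b : Fin i => ∑ j, M.mulVec (v a) j * M.mulVec (v b) j))

def extSet (i : ℕ) {d : ℕ} (M : Matrix (Fin d) (Fin d) ℝ) : Set ℝ :=
  { r | ∃ v : Fin i → (Fin d → ℝ), (∀ a, ∑ j, v a j ^ 2 ≤ 1) ∧ r = gram i M v }

lemma extPowNorm_eq (i : ℕ) (M : Matrix (Fin d) (Fin d) ℝ) :
    extPowNorm i d M = sSup (extSet i M) := rfl

lemma gram_nonneg (i : ℕ) (M : Matrix (Fin d) (Fin d) ℝ) (v : Fin i → Fin d → ℝ) :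
    0 ≤ gram i M v := Real.sqrt_nonneg _

lemma entry_abs_le {i : ℕ} {M : Matrix (Fin d) (Fin d) ℝ} {v : Fin i → Fin d → ℝ}
    (hv : ∀ a, ∑ j, v a j ^ 2 ≤ 1) (a b : Fin i) :
    |∑ j, M.mulVec (v a) j * M.mulVec (v b) j| ≤ matOpNorm M ^ 2 := by
  set x := M.mulVec (v a) with hx; set y := M.mulVec (v b) with hy
  have hcs : (∑ j, x j * y j) ^ 2 ≤ (∑ j, x j ^ 2) * (∑ j, y j ^ 2) :=
    Finset.sum_mul_sq_le_sq_mul_sq Finset.univ x y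
  have hxb : Real.sqrt (∑ j, x j ^ 2) ≤ matOpNorm M := by
    refine (Aux.norm_mulVec_le M (v a)).trans ?_
    have h1 : Real.sqrt (∑ j, v a j ^ 2) ≤ 1 := by
      rw [show (1:ℝ) = Real.sqrt 1 by simp]
      exact Real.sqrt_le_sqrt (hv a)
    calc matOpNorm M * Real.sqrt (∑ j, v a j ^ 2) ≤ matOpNorm M * 1 :=
          mul_le_mul_of_nonneg_left h1 (Aux.matOpNorm_nonneg M)
      _ = matOpNorm M := mul_one _
  have hyb : Real.sqrt (∑ j, y j ^ 2) ≤ matOpNorm M := by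
    refine (Aux.norm_mulVec_le M (v b)).trans ?_
    have h1 : Real.sqrt (∑ j, v b j ^ 2) ≤ 1 := by
      rw [show (1:ℝ) = Real.sqrt 1 by simp]
      exact Real.sqrt_le_sqrt (hv b)
    calc matOpNorm M * Real.sqrt (∑ j, v b j ^ 2) ≤ matOpNorm M * 1 :=
          mul_le_mul_of_nonneg_left h1 (Aux.matOpNorm_nonneg M)
      _ = matOpNorm M := mul_one _
  have h2 : |∑ j, x j * y j| = Real.sqrt ((∑ j, x j * y j) ^ 2) := (Real.sqrt_sq_eq_abs _).symm
  rw [h2]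
  calc Real.sqrt ((∑ j, x j * y j) ^ 2) ≤ Real.sqrt ((∑ j, x j ^ 2) * (∑ j, y j ^ 2)) :=
        Real.sqrt_le_sqrt hcs
    _ = Real.sqrt (∑ j, x j ^ 2) * Real.sqrt (∑ j, y j ^ 2) := Real.sqrt_mul (by positivity) _
    _ ≤ matOpNorm M * matOpNorm M := mul_le_mul hxb hyb (Real.sqrt_nonneg _) (Aux.matOpNorm_nonneg M)
    _ = matOpNorm M ^ 2 := (sq _).symm

lemma gram_le {i : ℕ} {M : Matrix (Fin d) (Fin d) ℝ} {v : Fin i → Fin d → ℝ}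
    (hv : ∀ a, ∑ j, v a j ^ 2 ≤ 1) :
    gram i M v ≤ Real.sqrt (i.factorial * (matOpNorm M ^ 2) ^ i) := by
  unfold gram
  refine Real.sqrt_le_sqrt ?_
  have := Matrix.det_le (A := Matrix.of fun a b : Fin i =>
      ∑ j, M.mulVec (v a) j * M.mulVec (v b) j) (abv := AbsoluteValue.abs)
    (x := matOpNorm M ^ 2) (fun a b => entry_abs_le hv a b)
  calc (Matrix.of fun a b : Fin i => ∑ j, M.mulVec (v a) j * M.mulVec (v b) j).det
      ≤ |(Matrix.of fun a b : Fin i => ∑ j, M.mulVec (v a) j * M.mulVec (v b) j).det| :=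
        le_abs_self _
    _ ≤ (Fintype.card (Fin i)).factorial • (matOpNorm M ^ 2) ^ i := by
        simpa using this
    _ = (i.factorial : ℝ) * (matOpNorm M ^ 2) ^ i := by
        simp [nsmul_eq_mul]

lemma extSet_nonempty (i : ℕ) (M : Matrix (Fin d) (Fin d) ℝ) : (extSet i M).Nonempty :=
  ⟨gram i M 0, 0, fun a => by simp, rfl⟩

lemma extSet_bddAbove (i : ℕ) (M : Matrix (Fin d) (Fin d) ℝ) :
    BddAbove (extSet i M) := by
  refine ⟨Real.sqrt (i.factorial * (matOpNorm M ^ 2) ^ i), fun r hr => ?_⟩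
  obtain ⟨v, hv, rfl⟩ := hr
  exact gram_le hv

lemma extPowNorm_le (i : ℕ) (M : Matrix (Fin d) (Fin d) ℝ) :
    extPowNorm i d M ≤ Real.sqrt (i.factorial * (matOpNorm M ^ 2) ^ i) := by
  rw [extPowNorm_eq]
  exact csSup_le (extSet_nonempty i M) fun r hr => by
    obtain ⟨v, hv, rfl⟩ := hr; exact gram_le hv

lemma extPowNorm_nonneg (i : ℕ) (M : Matrix (Fin d) (Fin d) ℝ) :
    0 ≤ extPowNorm i d M := by
  rw [extPowNorm_eq]
  refine le_csSup_of_le (extSet_bddAbove i M) ⟨0, fun a => by simp, rfl⟩ ?_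
  exact gram_nonneg i M 0

end Aux2

namespace Aux3
open Aux Aux2
variable {d : ℕ}

lemma matOpNorm_pos (hd : 0 < d) {N : Matrix (Fin d) (Fin d) ℝ} (h : IsUnit N.det) :
    0 < matOpNorm N := by
  rcases (Aux.matOpNorm_nonneg N).lt_or_eq with h1 | h1
  · exact h1
  · exfalso
    have h2 : LinearMap.toContinuousLinearMap (Matrix.toEuclideanLin N) = 0 :=
      (ContinuousLinearMap.opNorm_zero_iff _).mp h1.symm
    have h3 : Matrix.toEuclideanLin N = 0 := by
      refine LinearMap.ext fun v => ?_
      have := congrArg (fun g => g v) (congrArg DFunLike.coe h2)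
      simpa using this
    have h4 : N = 0 := Matrix.toEuclideanLin.injective (by rw [h3, map_zero])
    haveI : Nonempty (Fin d) := ⟨⟨0, hd⟩⟩
    rw [h4, Matrix.det_zero] at h
    exact h.ne_zero rfl

lemma le_extPowNorm {i : ℕ} (hi : 1 ≤ i) (hid : i ≤ d) {M : Matrix (Fin d) (Fin d) ℝ}
    (h : IsUnit M.det) : ((matOpNorm M⁻¹)⁻¹) ^ i ≤ extPowNorm i d M := by
  have hd : 0 < d := lt_of_lt_of_le hi hid
  set c := matOpNorm M⁻¹ with hc
  have hc0 : 0 < c := matOpNorm_pos hd (M.isUnit_nonsing_inv_det h)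
  set e : Fin i → Fin d → ℝ := fun a => Pi.single (Fin.castLE hid a) 1 with he
  have hesum : ∀ a, ∑ j, e a j ^ 2 = 1 := by
    intro a
    simp [he, Pi.single_apply]
  set v : Fin i → Fin d → ℝ := fun a => c⁻¹ • M⁻¹.mulVec (e a) with hv
  have hw : ∀ a, ∑ j, (M⁻¹.mulVec (e a)) j ^ 2 ≤ c ^ 2 := by
    intro a
    have h1 := Aux.norm_mulVec_le M⁻¹ (e a)
    rw [hesum a, Real.sqrt_one, mul_one] at h1
    have h2 : (0:ℝ) ≤ ∑ j, (M⁻¹.mulVec (e a)) j ^ 2 := by positivity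
    calc ∑ j, (M⁻¹.mulVec (e a)) j ^ 2
        = Real.sqrt (∑ j, (M⁻¹.mulVec (e a)) j ^ 2) ^ 2 := (Real.sq_sqrt h2).symm
      _ ≤ c ^ 2 := pow_le_pow_left₀ (Real.sqrt_nonneg _) h1 2
  have hvsum : ∀ a, ∑ j, v a j ^ 2 ≤ 1 := by
    intro a
    have : ∑ j, v a j ^ 2 = c⁻¹ ^ 2 * ∑ j, (M⁻¹.mulVec (e a)) j ^ 2 := by
      rw [Finset.mul_sum]
      refine Finset.sum_congr rfl fun j _ => ?_
      simp [hv, mul_pow]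
    rw [this]
    calc c⁻¹ ^ 2 * ∑ j, (M⁻¹.mulVec (e a)) j ^ 2 ≤ c⁻¹ ^ 2 * c ^ 2 :=
          mul_le_mul_of_nonneg_left (hw a) (by positivity)
      _ = 1 := by field_simp
  have hMv : ∀ a, M.mulVec (v a) = c⁻¹ • e a := by
    intro a
    rw [hv]
    simp only [Matrix.mulVec_smul, Matrix.mulVec_mulVec]
    rw [Matrix.mul_nonsing_inv _ h, Matrix.one_mulVec]
  have single_dot : ∀ x y : Fin d,
      ∑ j, (Pi.single x 1 : Fin d → ℝ) j * (Pi.single y 1 : Fin d → ℝ) j = if x = y then 1 else 0 := by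
    intro x y
    rcases eq_or_ne x y with rfl | hxy
    · simp [Pi.single_apply, ite_mul, mul_ite, Finset.sum_ite_eq']
    · rw [if_neg hxy]
      refine Finset.sum_eq_zero fun j _ => ?_
      rcases eq_or_ne j x with rfl | hj
      · have : (Pi.single y 1 : Fin d → ℝ) j = 0 := by
          rw [Pi.single_apply, if_neg hxy]
        rw [this, mul_zero]
      · have : (Pi.single x 1 : Fin d → ℝ) j = 0 := by rw [Pi.single_apply, if_neg hj]
        rw [this, zero_mul]
  have hgram : gram i M v = (c⁻¹) ^ i := by
    unfold gram
    have hmat : (Matrix.of fun a b : Fin i => ∑ j, M.mulVec (v a) j * M.mulVec (v b) j)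
        = (c⁻¹ * c⁻¹) • (1 : Matrix (Fin i) (Fin i) ℝ) := by
      ext a b
      rw [Matrix.of_apply, hMv, hMv]
      have hterm : ∀ j, (c⁻¹ • e a) j * (c⁻¹ • e b) j =
          (c⁻¹ * c⁻¹) * ((Pi.single (Fin.castLE hid a) 1 : Fin d → ℝ) j *
            (Pi.single (Fin.castLE hid b) 1 : Fin d → ℝ) j) := by
        intro j
        simp only [Pi.smul_apply, smul_eq_mul, he]
        ring
      rw [Finset.sum_congr rfl fun j _ => hterm j, ← Finset.mul_sum, single_dot]
      simp [Matrix.smul_apply, Matrix.one_apply, Fin.castLE_inj]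
    rw [hmat, Matrix.det_smul, Matrix.det_one, mul_one]
    rw [show (c⁻¹ * c⁻¹) ^ Fintype.card (Fin i) = ((c⁻¹) ^ i) ^ 2 by
      rw [Fintype.card_fin]; ring]
    exact Real.sqrt_sq (by positivity)
  rw [extPowNorm_eq]
  exact le_csSup (extSet_bddAbove i M) ⟨v, hvsum, hgram.symm⟩

end Aux3

namespace Aux4
open Aux Aux2 Aux3
variable {d : ℕ}

lemma matOpNorm_continuous : Continuous (matOpNorm (d := d)) := by
  have hψ : Continuous fun M : Matrix (Fin d) (Fin d) ℝ =>
      LinearMap.toContinuousLinearMap (Matrix.toEuclideanLin M) := by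
    exact LinearMap.continuous_of_finiteDimensional
      ((LinearMap.toContinuousLinearMap : _ ≃ₗ[ℝ] _).toLinearMap.comp
        (Matrix.toEuclideanLin :
          Matrix (Fin d) (Fin d) ℝ ≃ₗ[ℝ] _).toLinearMap)
  exact continuous_norm.comp hψ

lemma gram_continuous (i : ℕ) (v : Fin i → Fin d → ℝ) :
    Continuous fun M : Matrix (Fin d) (Fin d) ℝ => gram i M v := by
  unfold gram
  refine Real.continuous_sqrt.comp ?_
  refine Continuous.matrix_det ?_
  refine continuous_matrix fun a b => ?_
  simp only [Matrix.of_apply]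
  have hmv : ∀ (w : Fin d → ℝ) (j : Fin d),
      Continuous fun M : Matrix (Fin d) (Fin d) ℝ => M.mulVec w j := by
    intro w j
    simp only [Matrix.mulVec, dotProduct]
    exact continuous_finset_sum _ fun k _ =>
      (continuous_id.matrix_elem j k).mul continuous_const
  exact continuous_finset_sum _ fun j _ => (hmv (v a) j).mul (hmv (v b) j)

lemma extPowNorm_lsc (i : ℕ) :
    LowerSemicontinuous (fun M : Matrix (Fin d) (Fin d) ℝ => extPowNorm i d M) := by
  intro M₀ y hy
  dsimp only at hy ⊢
  rw [extPowNorm_eq] at hy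
  obtain ⟨r, hr, hyr⟩ := exists_lt_of_lt_csSup (extSet_nonempty i M₀) hy
  obtain ⟨v, hv, rfl⟩ := hr
  have hev : ∀ᶠ M in nhds M₀, y < gram i M v :=
    (gram_continuous i v).continuousAt (eventually_gt_nhds hyr)
  filter_upwards [hev] with M hM
  exact hM.trans_le (by
    rw [extPowNorm_eq]
    exact le_csSup (extSet_bddAbove i M) ⟨v, hv, rfl⟩)

instance matrixMS : MeasurableSpace (Matrix (Fin d) (Fin d) ℝ) :=
  (inferInstance : MeasurableSpace (Fin d → Fin d → ℝ))

instance matrixBS : BorelSpace (Matrix (Fin d) (Fin d) ℝ) :=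
  ⟨(inferInstance : BorelSpace (Fin d → Fin d → ℝ)).measurable_eq⟩

lemma extPowNorm_measurable (i : ℕ) :
    Measurable (fun M : Matrix (Fin d) (Fin d) ℝ => extPowNorm i d M) :=
  (extPowNorm_lsc i).measurable

end Aux4

namespace Aux5
open Aux Aux2 Aux3 Aux4
variable {X : Type*} [MeasurableSpace X] {d : ℕ} {f : X → X}

lemma meas_matrix {A : X → Matrix (Fin d) (Fin d) ℝ}
    (h : Measurable fun x i j => A x i j) : Measurable A := by
  refine measurable_pi_iff.mpr fun a => measurable_pi_iff.mpr fun b => ?_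
  have := (measurable_pi_iff.mp ((measurable_pi_iff.mp h) a)) b
  exact this

lemma measurable_matrix_mul {M N : X → Matrix (Fin d) (Fin d) ℝ}
    (hM : Measurable M) (hN : Measurable N) : Measurable fun x => M x * N x := by
  refine measurable_pi_iff.mpr fun a => measurable_pi_iff.mpr fun b => ?_
  have : (fun x => (M x * N x) a b) = fun x => ∑ k, M x a k * N x k b := by
    funext x; rw [Matrix.mul_apply]
  rw [this]
  exact Finset.measurable_sum _ fun k _ =>
    ((measurable_pi_iff.mp (measurable_pi_iff.mp hM a) k)).mul
      ((measurable_pi_iff.mp (measurable_pi_iff.mp hN k) b))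

lemma cocycle_measurable {A : X → Matrix (Fin d) (Fin d) ℝ}
    (hA : Measurable A) (hf : Measurable f) (n : ℕ) :
    Measurable (cocycleProd f d A n) := by
  induction n with
  | zero => exact measurable_const
  | succ n ih => exact measurable_matrix_mul (ih.comp hf) hA

lemma cocycle_isUnit {A : X → Matrix (Fin d) (Fin d) ℝ}
    (hA : ∀ x, IsUnit (A x).det) (n : ℕ) (x : X) :
    IsUnit (cocycleProd f d A n x).det := by
  induction n generalizing x with
  | zero => simp [cocycleProd]
  | succ n ih =>
    rw [show cocycleProd f d A (n+1) x = cocycleProd f d A n (f x) * A x from rfl,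
      Matrix.det_mul]
    exact (ih (f x)).mul (hA x)

lemma cocycle_norm_le {A : X → Matrix (Fin d) (Fin d) ℝ} {C : ℝ} (hC : 0 ≤ C)
    (n : ℕ) (x : X) (h : ∀ k < n, matOpNorm (A (f^[k] x)) ≤ C) :
    matOpNorm (cocycleProd f d A n x) ≤ C ^ n := by
  induction n generalizing x with
  | zero =>
    rw [show cocycleProd f d A 0 x = 1 from rfl, pow_zero]
    exact Aux.matOpNorm_one_le
  | succ n ih =>
    rw [show cocycleProd f d A (n+1) x = cocycleProd f d A n (f x) * A x from rfl]
    refine (Aux.matOpNorm_mul_le _ _).trans ?_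
    have h1 : matOpNorm (cocycleProd f d A n (f x)) ≤ C ^ n := by
      refine ih (f x) fun k hk => ?_
      have := h (k+1) (Nat.succ_lt_succ hk)
      rwa [Function.iterate_succ_apply] at this
    have h2 : matOpNorm (A x) ≤ C := by simpa using h 0 (Nat.succ_pos n)
    calc matOpNorm (cocycleProd f d A n (f x)) * matOpNorm (A x) ≤ C ^ n * C :=
      mul_le_mul h1 h2 (Aux.matOpNorm_nonneg _) (pow_nonneg hC n)
    _ = C ^ (n+1) := (pow_succ C n).symm

lemma cocycle_inv_norm_le {A : X → Matrix (Fin d) (Fin d) ℝ} {C : ℝ} (hC : 0 ≤ C)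
    (n : ℕ) (x : X) (h : ∀ k < n, matOpNorm ((A (f^[k] x))⁻¹) ≤ C) :
    matOpNorm ((cocycleProd f d A n x)⁻¹) ≤ C ^ n := by
  induction n generalizing x with
  | zero =>
    rw [show cocycleProd f d A 0 x = 1 from rfl, pow_zero, inv_one]
    exact Aux.matOpNorm_one_le
  | succ n ih =>
    rw [show cocycleProd f d A (n+1) x = cocycleProd f d A n (f x) * A x from rfl,
      Matrix.mul_inv_rev]
    refine (Aux.matOpNorm_mul_le _ _).trans ?_
    have h1 : matOpNorm ((cocycleProd f d A n (f x))⁻¹) ≤ C ^ n := by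
      refine ih (f x) fun k hk => ?_
      have := h (k+1) (Nat.succ_lt_succ hk)
      rwa [Function.iterate_succ_apply] at this
    have h2 : matOpNorm ((A x)⁻¹) ≤ C := by simpa using h 0 (Nat.succ_pos n)
    calc matOpNorm ((A x)⁻¹) * matOpNorm ((cocycleProd f d A n (f x))⁻¹) ≤ C * C ^ n :=
      mul_le_mul h2 h1 (Aux.matOpNorm_nonneg _) hC
    _ = C ^ (n+1) := (pow_succ' C n).symm

lemma cocycle_congr {A B : X → Matrix (Fin d) (Fin d) ℝ} (n : ℕ) (x : X)
    (h : ∀ k < n, B (f^[k] x) = A (f^[k] x)) :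
    cocycleProd f d B n x = cocycleProd f d A n x := by
  induction n generalizing x with
  | zero => rfl
  | succ n ih =>
    rw [show cocycleProd f d B (n+1) x = cocycleProd f d B n (f x) * B x from rfl,
      show cocycleProd f d A (n+1) x = cocycleProd f d A n (f x) * A x from rfl]
    rw [ih (f x) fun k hk => by
        have := h (k+1) (Nat.succ_lt_succ hk)
        rwa [Function.iterate_succ_apply] at this,
      show B x = A x by simpa using h 0 (Nat.succ_pos n)]

lemma abs_log_le {lo hi t : ℝ} (hlo : 0 < lo) (h1 : lo ≤ t) (h2 : t ≤ hi) :
    |Real.log t| ≤ |Real.log lo| + |Real.log hi| := by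
  have ht : 0 < t := hlo.trans_le h1
  have l1 : Real.log lo ≤ Real.log t := Real.log_le_log hlo h1
  have l2 : Real.log t ≤ Real.log hi := Real.log_le_log ht h2
  rw [abs_le]
  constructor
  · have := neg_abs_le (Real.log lo)
    have := abs_nonneg (Real.log hi)
    linarith
  · have := le_abs_self (Real.log hi)
    have := abs_nonneg (Real.log lo)
    linarith

end Aux5

namespace Aux6
open Aux Aux2 Aux3 Aux4 Aux5

variable {X : Type*} [MeasurableSpace X] {μ : Measure X} {f : X → X} {d : ℕ}

lemma ae_iterate (hfq : MeasureTheory.Measure.QuasiMeasurePreserving f μ μ)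
    {P : X → Prop} (hP : ∀ᵐ x ∂μ, P x) (n : ℕ) :
    ∀ᵐ x ∂μ, ∀ k < n, P (f^[k] x) := by
  rw [MeasureTheory.ae_all_iff]
  intro k
  have h0 : μ {x | ¬ P x} = 0 := hP
  have h1 : μ (f^[k] ⁻¹' {x | ¬ P x}) = 0 := (hfq.iterate k).preimage_null h0
  have h2 : ∀ᵐ x ∂μ, P (f^[k] x) := by
    rw [ae_iff]; exact h1
  filter_upwards [h2] with x hx _
  exact hx

variable [IsProbabilityMeasure μ] {i : ℕ} {C : ℝ}

/-- Pointwise bounds on the exterior power norm of the cocycle product. -/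
lemma ext_cocycle_bounds (hi : 1 ≤ i) (hid : i ≤ d)
    {B : X → Matrix (Fin d) (Fin d) ℝ} (hC1 : 1 < C)
    (hBinv : ∀ x, IsUnit (B x).det) (n : ℕ) (x : X)
    (hx : ∀ k < n + 1, matOpNorm (B (f^[k] x)) ≤ C ∧ matOpNorm ((B (f^[k] x))⁻¹) ≤ C) :
    ((C ^ (n+1))⁻¹) ^ i ≤ extPowNorm i d (cocycleProd f d B (n+1) x) ∧
      extPowNorm i d (cocycleProd f d B (n+1) x) ≤
        Real.sqrt (i.factorial * ((C ^ (n+1)) ^ 2) ^ i) := by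
  have hd : 0 < d := lt_of_lt_of_le hi hid
  have hC0 : (0:ℝ) ≤ C := le_of_lt (lt_trans one_pos hC1)
  have hnorm : matOpNorm (cocycleProd f d B (n+1) x) ≤ C ^ (n+1) :=
    cocycle_norm_le hC0 (n+1) x fun k hk => (hx k hk).1
  have hinvnorm : matOpNorm ((cocycleProd f d B (n+1) x)⁻¹) ≤ C ^ (n+1) :=
    cocycle_inv_norm_le hC0 (n+1) x fun k hk => (hx k hk).2
  have hunit : IsUnit (cocycleProd f d B (n+1) x).det := cocycle_isUnit hBinv (n+1) x
  constructor
  · have hpos : 0 < matOpNorm ((cocycleProd f d B (n+1) x)⁻¹) :=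
      matOpNorm_pos hd ((cocycleProd f d B (n+1) x).isUnit_nonsing_inv_det hunit)
    have h1 : ((C ^ (n+1))⁻¹) ≤ (matOpNorm ((cocycleProd f d B (n+1) x)⁻¹))⁻¹ :=
      inv_anti₀ hpos hinvnorm
    calc ((C ^ (n+1))⁻¹) ^ i ≤ ((matOpNorm ((cocycleProd f d B (n+1) x)⁻¹))⁻¹) ^ i :=
          pow_le_pow_left₀ (by positivity) h1 i
      _ ≤ extPowNorm i d (cocycleProd f d B (n+1) x) := le_extPowNorm hi hid hunit
  · refine (extPowNorm_le i _).trans ?_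
    refine Real.sqrt_le_sqrt ?_
    have h2 : matOpNorm (cocycleProd f d B (n+1) x) ^ 2 ≤ (C ^ (n+1)) ^ 2 :=
      pow_le_pow_left₀ (Aux.matOpNorm_nonneg _) hnorm 2
    exact mul_le_mul_of_nonneg_left (pow_le_pow_left₀ (by positivity) h2 i)
      (by positivity)

/-- The a.e. bounds on `log extPowNorm (cocycleProd ...)`. -/
lemma ae_ext_bounds (hi : 1 ≤ i) (hid : i ≤ d)
    (hfq : MeasureTheory.Measure.QuasiMeasurePreserving f μ μ)
    {B : X → Matrix (Fin d) (Fin d) ℝ} (hC1 : 1 < C)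
    (hBinv : ∀ x, IsUnit (B x).det)
    (hBbd : ∀ᵐ x ∂μ, matOpNorm (B x) < C ∧ matOpNorm (B x)⁻¹ < C) (n : ℕ) :
    ∀ᵐ x ∂μ, ((C ^ (n+1))⁻¹) ^ i ≤ extPowNorm i d (cocycleProd f d B (n+1) x) ∧
      extPowNorm i d (cocycleProd f d B (n+1) x) ≤
        Real.sqrt (i.factorial * ((C ^ (n+1)) ^ 2) ^ i) := by
  have hBbd' : ∀ᵐ x ∂μ, matOpNorm (B x) ≤ C ∧ matOpNorm (B x)⁻¹ ≤ C := by
    filter_upwards [hBbd] with x hx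
    exact ⟨hx.1.le, hx.2.le⟩
  filter_upwards [ae_iterate hfq hBbd' (n+1)] with x hx
  exact ext_cocycle_bounds hi hid hC1 hBinv n x hx

end Aux6

namespace Aux7
open Aux Aux2 Aux3 Aux4 Aux5 Aux6

variable {X : Type*} [MeasurableSpace X] {μ : Measure X} {f : X → X} {d : ℕ}
variable [IsProbabilityMeasure μ] {i : ℕ} {C : ℝ}

/-- Uniform a.e. log-bound. -/
lemma ae_log_bound (hi : 1 ≤ i) (hid : i ≤ d)
    (hfq : MeasureTheory.Measure.QuasiMeasurePreserving f μ μ)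
    {B : X → Matrix (Fin d) (Fin d) ℝ} (hC1 : 1 < C)
    (hBinv : ∀ x, IsUnit (B x).det)
    (hBbd : ∀ᵐ x ∂μ, matOpNorm (B x) < C ∧ matOpNorm (B x)⁻¹ < C) (n : ℕ) :
    ∀ᵐ x ∂μ, |Real.log (extPowNorm i d (cocycleProd f d B (n+1) x))| ≤
      |Real.log (((C ^ (n+1))⁻¹) ^ i)| +
        |Real.log (Real.sqrt (i.factorial * ((C ^ (n+1)) ^ 2) ^ i))| := by
  have hC0 : (0:ℝ) < C := lt_trans one_pos hC1
  filter_upwards [ae_ext_bounds hi hid hfq hC1 hBinv hBbd n] with x hx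
  exact abs_log_le (by positivity) hx.1 hx.2

lemma log_integrable (hi : 1 ≤ i) (hid : i ≤ d) (hfm : Measurable f)
    (hfq : MeasureTheory.Measure.QuasiMeasurePreserving f μ μ)
    {B : X → Matrix (Fin d) (Fin d) ℝ} (hC1 : 1 < C) (hB : Measurable B)
    (hBinv : ∀ x, IsUnit (B x).det)
    (hBbd : ∀ᵐ x ∂μ, matOpNorm (B x) < C ∧ matOpNorm (B x)⁻¹ < C) (n : ℕ) :
    Integrable (fun x => Real.log (extPowNorm i d (cocycleProd f d B (n+1) x))) μ := by
  refine ⟨(Real.measurable_log.comp ((extPowNorm_measurable i).comp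
    (cocycle_measurable hB hfm (n+1)))).aestronglyMeasurable, ?_⟩
  refine MeasureTheory.HasFiniteIntegral.of_bounded
    (C := |Real.log (((C ^ (n+1))⁻¹) ^ i)| +
      |Real.log (Real.sqrt (i.factorial * ((C ^ (n+1)) ^ 2) ^ i))|) ?_
  filter_upwards [ae_log_bound hi hid hfq hC1 hBinv hBbd n] with x hx
  simpa [Real.norm_eq_abs] using hx

lemma term_lower (hi : 1 ≤ i) (hid : i ≤ d) (hfm : Measurable f)
    (hfq : MeasureTheory.Measure.QuasiMeasurePreserving f μ μ)
    {B : X → Matrix (Fin d) (Fin d) ℝ} (hC1 : 1 < C) (hB : Measurable B)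
    (hBinv : ∀ x, IsUnit (B x).det)
    (hBbd : ∀ᵐ x ∂μ, matOpNorm (B x) < C ∧ matOpNorm (B x)⁻¹ < C) (n : ℕ) :
    -(i * Real.log C) ≤ (1 / (n + 1 : ℝ)) *
      ∫ x, Real.log (extPowNorm i d (cocycleProd f d B (n+1) x)) ∂μ := by
  have hC0 : (0:ℝ) < C := lt_trans one_pos hC1
  have hlog : Real.log (((C ^ (n+1))⁻¹) ^ i) = -((n+1 : ℝ) * (i * Real.log C)) := by
    rw [Real.log_pow, Real.log_inv, Real.log_pow]
    push_cast; ring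
  have hae : ∀ᵐ x ∂μ, -((n+1 : ℝ) * (i * Real.log C)) ≤
      Real.log (extPowNorm i d (cocycleProd f d B (n+1) x)) := by
    filter_upwards [ae_ext_bounds hi hid hfq hC1 hBinv hBbd n] with x hx
    rw [← hlog]
    exact Real.log_le_log (by positivity) hx.1
  have hint := log_integrable hi hid hfm hfq hC1 hB hBinv hBbd n
  have h1 : ∫ _x, -((n+1 : ℝ) * (i * Real.log C)) ∂μ ≤
      ∫ x, Real.log (extPowNorm i d (cocycleProd f d B (n+1) x)) ∂μ :=
    integral_mono_ae (integrable_const _) hint hae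
  rw [MeasureTheory.integral_const] at h1
  simp only [probReal_univ, one_smul] at h1
  have hn1 : (0:ℝ) < 1 / (n+1 : ℝ) := by positivity
  have := mul_le_mul_of_nonneg_left h1 hn1.le
  calc -(i * Real.log C) = (1 / (n+1 : ℝ)) * -((n+1 : ℝ) * (i * Real.log C)) := by
        field_simp
    _ ≤ _ := this

lemma ne_measurable {M N : X → Matrix (Fin d) (Fin d) ℝ}
    (hM : Measurable M) (hN : Measurable N) : MeasurableSet {x | M x ≠ N x} := by
  have : {x | M x = N x} = ⋂ (a : Fin d) (b : Fin d), {x | M x a b = N x a b} := by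
    ext x
    simp only [Set.mem_setOf_eq, Set.mem_iInter]
    constructor
    · intro h a b; rw [h]
    · intro h; exact Matrix.ext h
  have hmeas : MeasurableSet {x | M x = N x} := by
    rw [this]
    refine MeasurableSet.iInter fun a => MeasurableSet.iInter fun b => ?_
    exact measurableSet_eq_fun
      (measurable_pi_iff.mp (measurable_pi_iff.mp hM a) b)
      (measurable_pi_iff.mp (measurable_pi_iff.mp hN a) b)
  exact hmeas.compl

lemma En_subset (A B : X → Matrix (Fin d) (Fin d) ℝ) (n : ℕ) :
    {x | cocycleProd f d B (n+1) x ≠ cocycleProd f d A (n+1) x} ⊆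
      ⋃ k ∈ Finset.range (n+1), f^[k] ⁻¹' {x | B x ≠ A x} := by
  intro x hx
  by_contra h
  refine hx (cocycle_congr (n+1) x fun k hk => ?_)
  by_contra hne
  exact h (Set.mem_biUnion (Finset.mem_range.mpr hk) hne)

lemma En_measure_le (hf : MeasureTheory.MeasurePreserving f μ μ)
    {A B : X → Matrix (Fin d) (Fin d) ℝ}
    (hA : Measurable A) (hB : Measurable B) (n : ℕ) :
    μ {x | cocycleProd f d B (n+1) x ≠ cocycleProd f d A (n+1) x} ≤
      (n+1 : ℕ) * μ {x | B x ≠ A x} := by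
  refine le_trans (measure_mono (En_subset A B n)) ?_
  refine le_trans (measure_biUnion_finset_le _ _) ?_
  have : ∀ k, μ (f^[k] ⁻¹' {x | B x ≠ A x}) = μ {x | B x ≠ A x} := fun k =>
    (hf.iterate k).measure_preimage (ne_measurable hB hA).nullMeasurableSet
  rw [Finset.sum_congr rfl fun k _ => this k]
  simp [Finset.sum_const, mul_comm]

end Aux7

/-- Semicontinuity of Lyapunov exponent sums under small-measure modifications:
given a bounded cocycle `A`, a bound `C > ‖A^{±1}‖_∞` and `ε > 0`, there is `δ > 0`
such that every cocycle `B` with `‖B^{±1}‖_∞ < C` and `μ {x : B x ≠ A x} < δ`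
satisfies `L_i(B) < L_i(A) + ε`. -/
theorem lyapSum_semicontinuous_small_modification {X : Type*} [MeasurableSpace X]
    (μ : Measure X) [IsProbabilityMeasure μ] (f : X → X) (hf : Ergodic f μ)
    (d i : ℕ) (hi : 1 ≤ i) (hid : i ≤ d)
    (A : X → Matrix (Fin d) (Fin d) ℝ) (hAmeas : Measurable fun x i j => A x i j)
    (hAinv : ∀ x, IsUnit (A x).det)
    (C : ℝ) (hAbd : ∀ᵐ x ∂μ, matOpNorm (A x) < C ∧ matOpNorm (A x)⁻¹ < C)
    (ε : ℝ) (hε : 0 < ε) :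
    ∃ δ > (0 : ℝ), ∀ B : X → Matrix (Fin d) (Fin d) ℝ,
      (Measurable fun x i j => B x i j) →
      (∀ x, IsUnit (B x).det) →
      (∀ᵐ x ∂μ, matOpNorm (B x) < C ∧ matOpNorm (B x)⁻¹ < C) →
      μ {x | B x ≠ A x} < ENNReal.ofReal δ →
      lyapSum μ f d i B < lyapSum μ f d i A + ε := by
  classical
  have hd : 0 < d := lt_of_lt_of_le hi hid
  have hfm : Measurable f := hf.toMeasurePreserving.measurable
  have hfq := hf.toMeasurePreserving.quasiMeasurePreserving
  have hAm : Measurable A := Aux5.meas_matrix hAmeas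
  obtain ⟨x₀, hx₀⟩ := hAbd.exists
  have hC1 : 1 < C := by
    have h1 : (1:ℝ) ≤ matOpNorm (A x₀) * matOpNorm ((A x₀)⁻¹) := by
      calc (1:ℝ) = matOpNorm (1 : Matrix (Fin d) (Fin d) ℝ) := (Aux.matOpNorm_one hd).symm
        _ = matOpNorm (A x₀ * (A x₀)⁻¹) := by rw [Matrix.mul_nonsing_inv _ (hAinv x₀)]
        _ ≤ _ := Aux.matOpNorm_mul_le _ _
    nlinarith [Aux.matOpNorm_nonneg (A x₀), Aux.matOpNorm_nonneg ((A x₀)⁻¹), hx₀.1, hx₀.2]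
  have hC0 : (0:ℝ) < C := lt_trans one_pos hC1
  have hstep : lyapSum μ f d i A < lyapSum μ f d i A + ε/2 := by linarith
  obtain ⟨n, hn⟩ := exists_lt_of_ciInf_lt (show (⨅ n : ℕ, (1 / (n + 1 : ℝ)) *
      ∫ x, Real.log (extPowNorm i d (cocycleProd f d A (n + 1) x)) ∂μ) <
      lyapSum μ f d i A + ε/2 from hstep)
  set Lb : ℝ := |Real.log (((C ^ (n+1))⁻¹) ^ i)| +
    |Real.log (Real.sqrt (i.factorial * ((C ^ (n+1)) ^ 2) ^ i))| with hLb
  have hLb0 : 0 ≤ Lb := by positivity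
  have hnn : (0:ℝ) < (n:ℝ) + 1 := by positivity
  refine ⟨(ε/2) / (((n:ℝ)+1) * (2 * Lb + 1)), by positivity, ?_⟩
  set δ : ℝ := (ε/2) / (((n:ℝ)+1) * (2 * Lb + 1)) with hδdef
  have hδ0 : 0 < δ := by positivity
  intro B hBmeas hBinv hBbd hBsmall
  have hBm : Measurable B := Aux5.meas_matrix hBmeas
  have hIntB := Aux7.log_integrable hi hid hfm hfq hC1 hBm hBinv hBbd n
  have hIntA := Aux7.log_integrable hi hid hfm hfq hC1 hAm hAinv hAbd n
  set En := {x | cocycleProd f d B (n+1) x ≠ cocycleProd f d A (n+1) x} with hEndef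
  have hEnMeas : MeasurableSet En := Aux7.ne_measurable
    (Aux5.cocycle_measurable hBm hfm (n+1)) (Aux5.cocycle_measurable hAm hfm (n+1))
  have hEnμ : (μ En).toReal ≤ ((n:ℝ)+1) * δ := by
    have h1 : μ En ≤ (n+1 : ℕ) * μ {x | B x ≠ A x} :=
      Aux7.En_measure_le hf.toMeasurePreserving hAm hBm n
    have h2 : μ En ≤ (n+1 : ℕ) * ENNReal.ofReal δ :=
      h1.trans (by gcongr)
    have h3 : ((n+1 : ℕ) : ℝ≥0∞) * ENNReal.ofReal δ ≠ ⊤ :=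
      ENNReal.mul_ne_top (by simp) ENNReal.ofReal_ne_top
    calc (μ En).toReal ≤ (((n+1:ℕ) : ℝ≥0∞) * ENNReal.ofReal δ).toReal :=
          ENNReal.toReal_mono h3 h2
      _ = ((n:ℝ)+1) * δ := by
          rw [ENNReal.toReal_mul, ENNReal.toReal_ofReal hδ0.le, ENNReal.toReal_natCast]
          push_cast
          ring
  have hdiff : (∫ x, Real.log (extPowNorm i d (cocycleProd f d B (n+1) x)) ∂μ) -
      ∫ x, Real.log (extPowNorm i d (cocycleProd f d A (n+1) x)) ∂μ ≤
      2 * Lb * (μ En).toReal := by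
    rw [← integral_sub hIntB hIntA]
    have hmono : (∫ x, (Real.log (extPowNorm i d (cocycleProd f d B (n+1) x)) -
        Real.log (extPowNorm i d (cocycleProd f d A (n+1) x))) ∂μ) ≤
        ∫ x, En.indicator (fun _ => 2 * Lb) x ∂μ := by
      refine integral_mono_ae (hIntB.sub hIntA)
        ((integrable_const (2 * Lb)).indicator hEnMeas) ?_
      filter_upwards [Aux7.ae_log_bound hi hid hfq hC1 hBinv hBbd n,
        Aux7.ae_log_bound hi hid hfq hC1 hAinv hAbd n] with x h1 h2
      by_cases hx : x ∈ En
      · rw [Set.indicator_of_mem hx]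
        have e1 := le_abs_self (Real.log (extPowNorm i d (cocycleProd f d B (n+1) x)))
        have e2 := neg_abs_le (Real.log (extPowNorm i d (cocycleProd f d A (n+1) x)))
        rw [← hLb] at h1 h2
        linarith
      · rw [Set.indicator_of_notMem hx]
        have heq : cocycleProd f d B (n+1) x = cocycleProd f d A (n+1) x :=
          not_not.mp hx
        rw [heq]
        simp
    rw [MeasureTheory.integral_indicator_const _ hEnMeas] at hmono
    calc (∫ x, (Real.log (extPowNorm i d (cocycleProd f d B (n+1) x)) -
          Real.log (extPowNorm i d (cocycleProd f d A (n+1) x))) ∂μ) ≤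
          (μ En).toReal • (2 * Lb) := hmono
      _ = 2 * Lb * (μ En).toReal := by rw [smul_eq_mul]; ring
  have hBle : lyapSum μ f d i B ≤ (1 / ((n:ℝ) + 1)) *
      ∫ x, Real.log (extPowNorm i d (cocycleProd f d B (n+1) x)) ∂μ := by
    refine ciInf_le ⟨-(i * Real.log C), ?_⟩ n
    rintro r ⟨m, rfl⟩
    exact Aux7.term_lower hi hid hfm hfq hC1 hBm hBinv hBbd m
  have h4 : (∫ x, Real.log (extPowNorm i d (cocycleProd f d B (n+1) x)) ∂μ) ≤
      (∫ x, Real.log (extPowNorm i d (cocycleProd f d A (n+1) x)) ∂μ) +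
        2 * Lb * (((n:ℝ)+1) * δ) := by
    have h5 := mul_le_mul_of_nonneg_left hEnμ (by positivity : (0:ℝ) ≤ 2 * Lb)
    linarith
  have h6 : (1 / ((n:ℝ) + 1)) *
      (∫ x, Real.log (extPowNorm i d (cocycleProd f d B (n+1) x)) ∂μ) ≤
      (1 / ((n:ℝ) + 1)) *
      (∫ x, Real.log (extPowNorm i d (cocycleProd f d A (n+1) x)) ∂μ) + 2 * Lb * δ := by
    have h5 := mul_le_mul_of_nonneg_left h4 (by positivity : (0:ℝ) ≤ 1 / ((n:ℝ)+1))
    have h7 : (1 / ((n:ℝ) + 1)) *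
        ((∫ x, Real.log (extPowNorm i d (cocycleProd f d A (n+1) x)) ∂μ) +
          2 * Lb * (((n:ℝ)+1) * δ)) =
        (1 / ((n:ℝ) + 1)) *
        (∫ x, Real.log (extPowNorm i d (cocycleProd f d A (n+1) x)) ∂μ) + 2 * Lb * δ := by
      field_simp
    linarith [h5, h7.le, h7.ge]
  have h2Lbδ : 2 * Lb * δ < ε/2 := by
    rw [hδdef]
    rw [mul_div_assoc']
    rw [div_lt_iff₀ (by positivity)]
    have hpos : 0 < ε/2 * (2*Lb*(n:ℝ) + (n:ℝ) + 1) := by positivity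
    nlinarith [hpos]
  have hfinal : (1 / ((n:ℝ) + 1)) *
      (∫ x, Real.log (extPowNorm i d (cocycleProd f d A (n+1) x)) ∂μ) <
      lyapSum μ f d i A + ε/2 := hn
  calc lyapSum μ f d i B ≤ _ := hBle
    _ ≤ _ := h6
    _ < (lyapSum μ f d i A + ε/2) + ε/2 := by linarith
    _ = lyapSum μ f d i A + ε := by ring
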